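/- Let Ψ : (ℝ³∖{0}) × ℝ³ → ℝ be differentiable and define F_Ψ(u, u̇) = 3((u̇·u)/‖u‖²)·u̇ − 3((u̇·u)²/‖u‖⁴)·u − m·(u × u̇) + Ψ(u, u̇)·u. Then for all u ≠ 0 and all u̇ ∈ ℝ³ the identity 3·F_Ψ(u, u̇) − (∂F_Ψ/∂u)(u, u̇)[u] − 2·(∂F_Ψ/∂u̇)(u, u̇)[u̇] = 3·μ(u, u̇)·u holds, where the partial Fréchet derivatives act on the indicated slots, and μ(u, u̇) = (1/3)·(2Ψ(u, u̇) − 2·u̇·∇_{u̇}Ψ(u, u̇) − u·∇_uΨ(u, u̇)). -/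

import Mathlib

set_option maxHeartbeats 1000000


noncomputable section
open RealInnerProductSpace

/-- Three-dimensional Euclidean space. -/
abbrev E3 := EuclideanSpace ℝ (Fin 3)

/-- The cross product on ℝ³. -/
def cross (a b : E3) : E3 :=
  (WithLp.equiv 2 (Fin 3 → ℝ)).symm
    ![a 1 * b 2 - a 2 * b 1, a 2 * b 0 - a 0 * b 2, a 0 * b 1 - a 1 * b 0]

/-- The Euler–Poisson expression
𝓔(u, u̇, ü) = (ü × u)/‖u‖³ − 3((u̇·u)/‖u‖⁵)(u̇ × u) + (m/‖u‖³)(‖u‖² u̇ − (u̇·u) u). -/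
def EP (m : ℝ) (u du ddu : E3) : E3 :=
  (‖u‖ ^ 3)⁻¹ • cross ddu u - (3 * ⟪du, u⟫ / ‖u‖ ^ 5) • cross du u
    + (m / ‖u‖ ^ 3) • (‖u‖ ^ 2 • du - ⟪du, u⟫ • u)

/-- The right-hand side F_Ψ(u, u̇) of the equation solved for the third derivative,
for an arbitrary supplementary function Ψ. -/
def FPsi (m : ℝ) (Ψ : E3 × E3 → ℝ) (u du : E3) : E3 :=
  (3 * (⟪du, u⟫ / ‖u‖ ^ 2)) • du - (3 * (⟪du, u⟫ ^ 2 / ‖u‖ ^ 4)) • u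
    - m • cross u du + Ψ (u, du) • u

lemma cross_smul_left' (t : ℝ) (a b : E3) : cross (t • a) b = t • cross a b := by
  ext i; fin_cases i <;>
    simp [cross, WithLp.equiv_symm_apply, PiLp.toLp_apply, PiLp.smul_apply, smul_eq_mul] <;> ring

lemma cross_smul_right' (t : ℝ) (a b : E3) : cross a (t • b) = t • cross a b := by
  ext i; fin_cases i <;>
    simp [cross, WithLp.equiv_symm_apply, PiLp.toLp_apply, PiLp.smul_apply, smul_eq_mul] <;> ring

/-- `cross · b` as a linear map. -/
def crossLM₁ (b : E3) : E3 →ₗ[ℝ] E3 where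
  toFun a := cross a b
  map_add' x y := by
    ext i; fin_cases i <;> simp [cross, WithLp.equiv_symm_apply, PiLp.toLp_apply, PiLp.add_apply] <;> ring
  map_smul' t x := by
    ext i; fin_cases i <;>
      simp [cross, WithLp.equiv_symm_apply, PiLp.toLp_apply, PiLp.smul_apply, smul_eq_mul] <;> ring

/-- `cross a ·` as a linear map. -/
def crossLM₂ (a : E3) : E3 →ₗ[ℝ] E3 where
  toFun b := cross a b
  map_add' x y := by
    ext i; fin_cases i <;> simp [cross, WithLp.equiv_symm_apply, PiLp.toLp_apply, PiLp.add_apply] <;> ring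
  map_smul' t x := by
    ext i; fin_cases i <;>
      simp [cross, WithLp.equiv_symm_apply, PiLp.toLp_apply, PiLp.smul_apply, smul_eq_mul] <;> ring

lemma differentiable_cross_left (b : E3) : Differentiable ℝ (fun a => cross a b) :=
  (LinearMap.toContinuousLinearMap (crossLM₁ b)).differentiable

lemma differentiable_cross_right (a : E3) : Differentiable ℝ (fun b => cross a b) :=
  (LinearMap.toContinuousLinearMap (crossLM₂ a)).differentiable

lemma fderiv_eq_inner_gradient {f : E3 → ℝ} {x : E3} (h : DifferentiableAt ℝ f x) (y : E3) :
    ⟪y, gradient f x⟫ = fderiv ℝ f x y := by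
  rw [real_inner_comm]
  have h2 := h.hasGradientAt
  rw [hasGradientAt_iff_hasFDerivAt] at h2
  rw [h2.fderiv]; simp

lemma aux1 (c n t : ℝ) (ht : t ≠ 0) (hn : n ≠ 0) :
    3 * ((t * c) / (t * (t * n))) = t⁻¹ * (3 * (c / n)) := by
  field_simp

lemma aux2 (c n t : ℝ) (ht : t ≠ 0) (hn : n ≠ 0) :
    (3 * ((t * c) ^ 2 / (t * (t * n)) ^ 2)) * t = t⁻¹ * (3 * (c ^ 2 / n ^ 2)) := by
  field_simp

/-- the reducibility identity
3F_Ψ − (∂F_Ψ/∂u)[u] − 2(∂F_Ψ/∂u̇)[u̇] = 3μ·u with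
μ = (1/3)(2Ψ − 2u̇·∇_{u̇}Ψ − u·∇_uΨ). -/
theorem FPsi_reducibility_mu (m : ℝ) (Ψ : E3 × E3 → ℝ)
    (hΨ : ∀ (u du : E3), u ≠ 0 → DifferentiableAt ℝ Ψ (u, du))
    (u du : E3) (hu : u ≠ 0) :
    (3 : ℝ) • FPsi m Ψ u du - fderiv ℝ (fun w => FPsi m Ψ w du) u u
        - (2 : ℝ) • fderiv ℝ (fun w => FPsi m Ψ u w) du du
      = (3 * ((1 / 3) * (2 * Ψ (u, du)
          - 2 * ⟪du, gradient (fun w => Ψ (u, w)) du⟫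
          - ⟪u, gradient (fun w => Ψ (w, du)) u⟫))) • u := by
  have hn : ⟪u, u⟫ ≠ 0 := inner_self_ne_zero.2 hu
  have hnorm : ‖u‖ ≠ 0 := norm_ne_zero_iff.2 hu
  have hΨ1 : DifferentiableAt ℝ (fun w => Ψ (w, du)) u :=
    (hΨ u du hu).comp u (differentiableAt_id.prodMk (differentiableAt_const du))
  have hΨ2 : DifferentiableAt ℝ (fun w => Ψ (u, w)) du :=
    (hΨ u du hu).comp du ((differentiableAt_const u).prodMk differentiableAt_id)
  -- rewrite the first-slot function in inner-product form
  have hFeq : (fun w => FPsi m Ψ w du) = (fun w : E3 =>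
      (3 * (⟪du, w⟫ / ⟪w, w⟫)) • du - (3 * (⟪du, w⟫ ^ 2 / ⟪w, w⟫ ^ 2)) • w
        - m • cross w du + Ψ (w, du) • w) := by
    funext w
    have hw2 : (‖w‖ : ℝ) ^ 2 = ⟪w, w⟫ := (real_inner_self_eq_norm_sq w).symm
    have hw4 : (‖w‖ : ℝ) ^ 4 = ⟪w, w⟫ ^ 2 := by rw [← hw2]; ring
    simp only [FPsi]
    rw [hw4, hw2]
  ------------------------------------------------------------------
  -- SLOT 1
  ------------------------------------------------------------------
  have hc : DifferentiableAt ℝ (fun w : E3 => ⟪du, w⟫) u :=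
    (differentiableAt_const du).inner ℝ differentiableAt_id
  have hq : DifferentiableAt ℝ (fun w : E3 => ⟪w, w⟫) u :=
    differentiableAt_id.inner ℝ differentiableAt_id
  have h1 : DifferentiableAt ℝ (fun w : E3 => 3 * (⟪du, w⟫ / ⟪w, w⟫)) u := by
    simpa [div_eq_mul_inv] using (hc.mul (hq.inv hn)).const_mul 3
  have h2 : DifferentiableAt ℝ (fun w : E3 => 3 * (⟪du, w⟫ ^ 2 / ⟪w, w⟫ ^ 2)) u := by
    simpa [div_eq_mul_inv] using ((hc.pow 2).mul ((hq.pow 2).inv (pow_ne_zero 2 hn))).const_mul 3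
  have hF1 : DifferentiableAt ℝ (fun w : E3 =>
      (3 * (⟪du, w⟫ / ⟪w, w⟫)) • du - (3 * (⟪du, w⟫ ^ 2 / ⟪w, w⟫ ^ 2)) • w
        - m • cross w du + Ψ (w, du) • w) u :=
    (((h1.smul_const du).sub (h2.smul differentiableAt_id)).sub
      (((differentiable_cross_left du) u).const_smul m)).add (hΨ1.smul differentiableAt_id)
  have hline : HasDerivAt (fun t : ℝ => t • u) u 1 := by
    simpa using (hasDerivAt_id (1:ℝ)).smul_const u
  have hg : HasDerivAt (fun t : ℝ => Ψ (t • u, du)) (fderiv ℝ (fun w => Ψ (w, du)) u u) 1 := by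
    have hfd : HasFDerivAt (fun w => Ψ (w, du)) (fderiv ℝ (fun w => Ψ (w, du)) u) ((1:ℝ) • u) := by
      rw [one_smul]; exact hΨ1.hasFDerivAt
    exact hfd.comp_hasDerivAt 1 hline
  have k1 : HasDerivAt (fun t : ℝ => (t⁻¹ * (3 * (⟪du, u⟫ / ⟪u, u⟫))) • du)
      (((-(1 ^ 2)⁻¹ : ℝ) * (3 * (⟪du, u⟫ / ⟪u, u⟫))) • du) 1 :=
    ((hasDerivAt_inv one_ne_zero).mul_const _).smul_const du
  have k2 : HasDerivAt (fun t : ℝ => (t⁻¹ * (3 * (⟪du, u⟫ ^ 2 / ⟪u, u⟫ ^ 2))) • u)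
      (((-(1 ^ 2)⁻¹ : ℝ) * (3 * (⟪du, u⟫ ^ 2 / ⟪u, u⟫ ^ 2))) • u) 1 :=
    ((hasDerivAt_inv one_ne_zero).mul_const _).smul_const u
  have k3 : HasDerivAt (fun t : ℝ => (t * m) • cross u du) ((1 * m) • cross u du) 1 :=
    ((hasDerivAt_id (1:ℝ)).mul_const m).smul_const (cross u du)
  have k4 : HasDerivAt (fun t : ℝ => Ψ (t • u, du) • (t • u))
      (Ψ ((1:ℝ) • u, du) • u + fderiv ℝ (fun w => Ψ (w, du)) u u • ((1:ℝ) • u)) 1 :=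
    hg.smul hline
  have hexp := ((k1.sub k2).sub k3).add k4
  have hev : (fun t : ℝ => (fun w : E3 =>
      (3 * (⟪du, w⟫ / ⟪w, w⟫)) • du - (3 * (⟪du, w⟫ ^ 2 / ⟪w, w⟫ ^ 2)) • w
        - m • cross w du + Ψ (w, du) • w) (t • u))
      =ᶠ[nhds (1:ℝ)] (fun t : ℝ =>
      (t⁻¹ * (3 * (⟪du, u⟫ / ⟪u, u⟫))) • du - (t⁻¹ * (3 * (⟪du, u⟫ ^ 2 / ⟪u, u⟫ ^ 2))) • u
        - (t * m) • cross u du + Ψ (t • u, du) • (t • u)) := by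
    filter_upwards [eventually_ne_nhds one_ne_zero] with t ht
    simp only [real_inner_smul_right, real_inner_smul_left, cross_smul_left', smul_smul]
    rw [aux1 _ _ _ ht hn, aux2 _ _ _ ht hn, mul_comm m t]
  have hder := hexp.congr_of_eventuallyEq hev
  have hcomp : HasDerivAt (fun t : ℝ => (fun w : E3 =>
      (3 * (⟪du, w⟫ / ⟪w, w⟫)) • du - (3 * (⟪du, w⟫ ^ 2 / ⟪w, w⟫ ^ 2)) • w
        - m • cross w du + Ψ (w, du) • w) (t • u))
      (fderiv ℝ (fun w : E3 =>
      (3 * (⟪du, w⟫ / ⟪w, w⟫)) • du - (3 * (⟪du, w⟫ ^ 2 / ⟪w, w⟫ ^ 2)) • w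
        - m • cross w du + Ψ (w, du) • w) u u) 1 := by
    have hfd : HasFDerivAt (fun w : E3 =>
      (3 * (⟪du, w⟫ / ⟪w, w⟫)) • du - (3 * (⟪du, w⟫ ^ 2 / ⟪w, w⟫ ^ 2)) • w
        - m • cross w du + Ψ (w, du) • w)
        (fderiv ℝ (fun w : E3 =>
      (3 * (⟪du, w⟫ / ⟪w, w⟫)) • du - (3 * (⟪du, w⟫ ^ 2 / ⟪w, w⟫ ^ 2)) • w
        - m • cross w du + Ψ (w, du) • w) u) ((1:ℝ) • u) := by
      rw [one_smul]; exact hF1.hasFDerivAt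
    exact hfd.comp_hasDerivAt 1 hline
  have e1 := hcomp.unique hder
  ------------------------------------------------------------------
  -- SLOT 2
  ------------------------------------------------------------------
  have hc2 : DifferentiableAt ℝ (fun w : E3 => ⟪w, u⟫) du :=
    differentiableAt_id.inner ℝ (differentiableAt_const u)
  have h1' : DifferentiableAt ℝ (fun w : E3 => 3 * (⟪w, u⟫ / ‖u‖ ^ 2)) du := by
    simpa [div_eq_mul_inv] using (hc2.mul_const ((‖u‖ ^ 2)⁻¹ : ℝ)).const_mul 3
  have h2' : DifferentiableAt ℝ (fun w : E3 => 3 * (⟪w, u⟫ ^ 2 / ‖u‖ ^ 4)) du := by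
    simpa [div_eq_mul_inv] using ((hc2.pow 2).mul_const ((‖u‖ ^ 4)⁻¹ : ℝ)).const_mul 3
  have hF2 : DifferentiableAt ℝ (fun w => FPsi m Ψ u w) du := by
    simp only [FPsi]
    exact (((h1'.smul differentiableAt_id).sub (h2'.smul_const u)).sub
        (((differentiable_cross_right u) du).const_smul m)).add (hΨ2.smul_const u)
  have hlinedu : HasDerivAt (fun t : ℝ => t • du) du 1 := by
    simpa using (hasDerivAt_id (1:ℝ)).smul_const du
  have hg2 : HasDerivAt (fun t : ℝ => Ψ (u, t • du)) (fderiv ℝ (fun w => Ψ (u, w)) du du) 1 := by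
    have hfd : HasFDerivAt (fun w => Ψ (u, w)) (fderiv ℝ (fun w => Ψ (u, w)) du) ((1:ℝ) • du) := by
      rw [one_smul]; exact hΨ2.hasFDerivAt
    exact hfd.comp_hasDerivAt 1 hlinedu
  have l1 : HasDerivAt (fun t : ℝ => (3 * ((t * ⟪du, u⟫) / ‖u‖ ^ 2)) • (t • du))
      ((3 * ((1 * ⟪du, u⟫) / ‖u‖ ^ 2)) • du
        + (3 * ((1 * ⟪du, u⟫) / ‖u‖ ^ 2)) • ((1:ℝ) • du)) 1 :=
    (HasDerivAt.const_mul 3 (((hasDerivAt_id (1:ℝ)).mul_const ⟪du, u⟫).div_const (‖u‖ ^ 2))).smul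
      hlinedu
  have l2 : HasDerivAt (fun t : ℝ => (3 * ((t * ⟪du, u⟫) ^ 2 / ‖u‖ ^ 4)) • u)
      ((3 * ((2 * ((1:ℝ) * ⟪du, u⟫) ^ 1 * (1 * ⟪du, u⟫)) / ‖u‖ ^ 4)) • u) 1 :=
    (HasDerivAt.const_mul 3
      ((((hasDerivAt_id (1:ℝ)).mul_const ⟪du, u⟫).pow 2).div_const (‖u‖ ^ 4))).smul_const u
  have l3 : HasDerivAt (fun t : ℝ => m • (t • cross u du)) (m • ((1:ℝ) • cross u du)) 1 :=
    ((hasDerivAt_id (1:ℝ)).smul_const (cross u du)).const_smul m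
  have l4 : HasDerivAt (fun t : ℝ => Ψ (u, t • du) • u)
      (fderiv ℝ (fun w => Ψ (u, w)) du du • u) 1 :=
    hg2.smul_const u
  have hexp2 := ((l1.sub l2).sub l3).add l4
  have hfun2 : (fun t : ℝ => FPsi m Ψ u (t • du)) = (fun t : ℝ =>
      (3 * ((t * ⟪du, u⟫) / ‖u‖ ^ 2)) • (t • du) - (3 * ((t * ⟪du, u⟫) ^ 2 / ‖u‖ ^ 4)) • u
        - m • (t • cross u du) + Ψ (u, t • du) • u) := by
    funext t
    simp only [FPsi, real_inner_smul_left, cross_smul_right']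
  have hder2 := hexp2.congr_of_eventuallyEq (Filter.Eventually.of_forall (fun t => congrFun hfun2 t))
  have hcomp2 : HasDerivAt (fun t : ℝ => FPsi m Ψ u (t • du))
      (fderiv ℝ (fun w => FPsi m Ψ u w) du du) 1 := by
    have hfd : HasFDerivAt (fun w => FPsi m Ψ u w)
        (fderiv ℝ (fun w => FPsi m Ψ u w) du) ((1:ℝ) • du) := by
      rw [one_smul]; exact hF2.hasFDerivAt
    exact hfd.comp_hasDerivAt 1 hlinedu
  have e2 := hcomp2.unique hder2
  ------------------------------------------------------------------
  -- ASSEMBLY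
  ------------------------------------------------------------------
  have hg1' : ⟪u, gradient (fun w => Ψ (w, du)) u⟫ = fderiv ℝ (fun w => Ψ (w, du)) u u :=
    fderiv_eq_inner_gradient hΨ1 u
  have hg2' : ⟪du, gradient (fun w => Ψ (u, w)) du⟫ = fderiv ℝ (fun w => Ψ (u, w)) du du :=
    fderiv_eq_inner_gradient hΨ2 du
  rw [hFeq, e1, e2, hg1', hg2']
  simp only [FPsi, one_smul, real_inner_self_eq_norm_sq]
  match_scalars <;> field_simp <;> ring
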